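/- The set I consisting of 0 together with all constants c_T ∈ R appearing as σ^{r−k}(lc_∂(T)) = c_T · g over all desingularized operators T for L (of any order k), where g is the fixed primitive polynomial p_1^{e_1−k_1}···p_m^{e_m−k_m}, is an ideal of R. In particular, since R is a PID, there is a desingularized operator whose constant c divides c_T for every desingularized operator T (a completely desingularized operator exists). -/

import Mathlib

open Polynomial

noncomputable section

/-- `Q_R(x)`, the field of rational functions over the fraction field `Q_R` of `R`,
realized as the fraction field of `R[x]`. -/
abbrev QX (R : Type) [CommRing R] [IsDomain R] := FractionRing (Polynomial R)

/-- Data of an Ore algebra `R[x][∂; σ, δ] ⊆ Q_R(x)[∂; σ, δ]`.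
The ring `A` plays the role of `Q_R(x)[∂]`; `ι` embeds the coefficient field,
`D` is the Ore variable `∂`, subject to the commutation rule `∂·p = σ(p)·∂ + δ(p)`,
and every element of `A` has a unique finite coefficient expansion `Σ ι(cᵢ)·∂^i`. -/
structure OreAlg (R : Type) [CommRing R] [IsDomain R] (A : Type) [Ring A] where
  σ : Polynomial R ≃+* Polynomial R
  σ_fix : ∀ r : R, σ (C r) = C r
  δ : Polynomial R → Polynomial R
  δ_add : ∀ f g, δ (f + g) = δ f + δ g
  δ_linear : ∀ (r : R) (f), δ (C r * f) = C r * δ f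
  ι : QX R →+* A
  ι_inj : Function.Injective ι
  D : A
  comm_rule : ∀ p : Polynomial R,
    D * ι (algebraMap (Polynomial R) (QX R) p)
      = ι (algebraMap (Polynomial R) (QX R) (σ p)) * D
        + ι (algebraMap (Polynomial R) (QX R) (δ p))
  δ_leibniz : ∀ f g, δ (f * g) = σ f * δ g + δ f * g
  coeff : A → ℕ → QX R
  coeff_inj : ∀ P Q : A, (∀ i, coeff P i = coeff Q i) → P = Q
  coeff_add : ∀ P Q i, coeff (P + Q) i = coeff P i + coeff Q i
  coeff_smul : ∀ (f : QX R) (P : A) (i), coeff (ι f * P) i = f * coeff P i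
  coeff_bdd : ∀ P : A, ∃ N, ∀ i, N < i → coeff P i = 0
  coeff_mk : ∀ (N : ℕ) (c : ℕ → QX R), (∀ i, N < i → c i = 0) →
    ∀ j, coeff (∑ i ∈ Finset.range (N + 1), ι (c i) * D ^ i) j = c j

namespace OreAlg

variable {R : Type} [CommRing R] [IsDomain R] {A : Type} [Ring A] (O : OreAlg R A)

/-- The embedding of `R[x]` into the Ore algebra. -/
def ιp (f : Polynomial R) : A := O.ι (algebraMap (Polynomial R) (QX R) f)

/-- The `i`-th `∂`-coefficient of `P` lies in `R[x]`. -/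
def PolyCoeff (P : A) (i : ℕ) : Prop :=
  ∃ f : Polynomial R, O.coeff P i = algebraMap (Polynomial R) (QX R) f

/-- `P` belongs to the subring `R[x][∂]` of `Q_R(x)[∂]`. -/
def InB (P : A) : Prop := ∀ i, O.PolyCoeff P i

/-- The order (degree in `∂`) of an operator. -/
def ord (P : A) : ℕ := sSup {i | O.coeff P i ≠ 0}

/-- The leading coefficient (with respect to `∂`), in `Q_R(x)`. -/
def lc (P : A) : QX R := O.coeff P (O.ord P)

/-- The contraction ideal `cont(L) = Q_R(x)[∂]·L ∩ R[x][∂]`. -/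
def cont (L : A) : Set A := {P | O.InB P ∧ ∃ Q : A, P = Q * L}

/-- The `k`-th submodule `M_k(L) = {P ∈ cont(L) : deg_∂ P ≤ k}`. -/
def M (L : A) (k : ℕ) : Set A := {P | P ∈ O.cont L ∧ O.ord P ≤ k}

/-- The `k`-th coefficient ideal `I_k = {[∂^k]P : P ∈ M_k} ∪ {0}` (as a set of
polynomials; `0` arises from `P = 0`). -/
def Icoeff (L : A) (k : ℕ) : Set (Polynomial R) :=
  {f | ∃ P ∈ O.M L k, O.coeff P k = algebraMap (Polynomial R) (QX R) f}

end OreAlg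

/-- `gcd(p, w) = 1` in `R[x]`: every common divisor is a unit. -/
def Copr {R : Type} [CommRing R] (p w : Polynomial R) : Prop :=
  ∀ d : Polynomial R, d ∣ p → d ∣ w → IsUnit d

namespace OreAlg

variable {R : Type} [CommRing R] [IsDomain R] {A : Type} [Ring A] (O : OreAlg R A)

/-- `P` is a `p`-removing operator for `L` over `R[x]`, of order `k`:
`P·L ∈ R[x][∂]` and `σ^{-k}(lc_∂(P·L)) = (w/(v·p))·lc_∂(L)` with `gcd(p, w) = 1`. -/
def IsRemoving (L : A) (p : Polynomial R) (k : ℕ) (P : A) : Prop :=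
  O.ord P = k ∧ O.InB (P * L) ∧
  ∃ w v t l : Polynomial R, v ≠ 0 ∧ Copr p w ∧
    O.lc (P * L) = algebraMap (Polynomial R) (QX R) t ∧
    O.lc L = algebraMap (Polynomial R) (QX R) l ∧
    (⇑O.σ.symm)^[k] t * (v * p) = w * l

/-- `p` is removable from `L` (at some order). -/
def Removable (L : A) (p : Polynomial R) : Prop :=
  ∃ k P, O.IsRemoving L p k P

/-- Factorization data for `lc_∂(L) = c·p₁^{e₁}⋯p_m^{e_m}`, with `c ∈ R` and the
`pᵢ ∈ R[x] \ R` irreducible and pairwise coprime; `L` has order `r > 0`. -/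
def Factored (L : A) (r m : ℕ) (c : R) (p : Fin m → Polynomial R)
    (e : Fin m → ℕ) : Prop :=
  O.ord L = r ∧ 0 < r ∧ c ≠ 0 ∧
  O.lc L = algebraMap (Polynomial R) (QX R) (C c * ∏ i, p i ^ e i) ∧
  (∀ i, Irreducible (p i) ∧ 0 < (p i).natDegree) ∧
  (∀ i j, i ≠ j → Copr (p i) (p j))

/-- `T` is a desingularized operator for `L`: `T ∈ cont(L)` and
`σ^{r-k}(lc_∂(T)) = (a/(b·∏ pᵢ^{kᵢ}))·lc_∂(L)` with `a, b ∈ R`, where each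
`pᵢ^{dᵢ}` with `dᵢ > kᵢ` is non-removable from `L`. -/
def Desing (L : A) (r m : ℕ) (c : R) (p : Fin m → Polynomial R)
    (e : Fin m → ℕ) (T : A) : Prop :=
  T ∈ O.cont L ∧ r ≤ O.ord T ∧
  ∃ (a b : R) (k : Fin m → ℕ) (t l : Polynomial R),
    b ≠ 0 ∧ (∀ i, k i ≤ e i) ∧
    O.lc T = algebraMap (Polynomial R) (QX R) t ∧
    O.lc L = algebraMap (Polynomial R) (QX R) l ∧
    (⇑O.σ.symm)^[O.ord T - r] t * (C b * ∏ i, p i ^ k i) = C a * l ∧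
    (∀ i (d : ℕ), k i < d → ¬ O.Removable L (p i ^ d))

/-- The left ideal of `R[x][∂]` generated by a set `S ⊆ R[x][∂]`. -/
def LIdeal (S : Set A) : Set A :=
  {P | ∃ (n : ℕ) (co s : Fin n → A), (∀ i, O.InB (co i)) ∧ (∀ i, s i ∈ S) ∧
    P = ∑ i, co i * s i}

/-- The constant `a ∈ R` viewed inside the Ore algebra. -/
def cst (a : R) : A := O.ιp (C a)

/-- The saturation `I : a^∞ = {P ∈ R[x][∂] : aⁱ·P ∈ I for some i}`. -/
def sat (I : Set A) (a : R) : Set A :=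
  {P | O.InB P ∧ ∃ i : ℕ, O.cst a ^ i * P ∈ I}

end OreAlg

/-- The set of constants `c_T` arising from desingularized operators `T` for `L`
via `σ^{r-k}(lc_∂(T)) = c_T·g`, together with `0`. -/
def OreAlg.DesingConsts {R : Type} [CommRing R] [IsDomain R] {A : Type} [Ring A]
    (O : OreAlg R A) (L : A) (r m : ℕ) (c : R) (p : Fin m → Polynomial R)
    (e : Fin m → ℕ) (g : Polynomial R) : Set R :=
  {c' | c' = 0 ∨ ∃ (T : A) (t : Polynomial R),
    O.Desing L r m c p e T ∧
    O.lc T = algebraMap (Polynomial R) (QX R) t ∧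
    (⇑O.σ.symm)^[O.ord T - r] t = C c' * g}

/-! ### Auxiliary lemmas -/

section AuxBasic

variable {S : Type} [CommRing S]

lemma iter_map_add (e : S ≃+* S) (n : ℕ) (x y : S) :
    (⇑e)^[n] (x + y) = (⇑e)^[n] x + (⇑e)^[n] y := by
  induction n generalizing x y with
  | zero => simp
  | succ n ih => simp [Function.iterate_succ_apply', ih, map_add]

lemma iter_map_mul (e : S ≃+* S) (n : ℕ) (x y : S) :
    (⇑e)^[n] (x * y) = (⇑e)^[n] x * (⇑e)^[n] y := by
  induction n generalizing x y with
  | zero => simp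
  | succ n ih => simp [Function.iterate_succ_apply', ih, map_mul]

lemma iter_map_fix (e : S ≃+* S) {c : S} (hc : e c = c) (n : ℕ) :
    (⇑e)^[n] c = c := by
  induction n with
  | zero => simp
  | succ n ih => simp [Function.iterate_succ_apply', ih, hc]

lemma iter_map_inj (e : S ≃+* S) (n : ℕ) :
    Function.Injective ((⇑e)^[n]) :=
  Function.Injective.iterate e.injective n

lemma iter_map_ne_zero (e : S ≃+* S) (n : ℕ) {x : S} (hx : x ≠ 0) :
    (⇑e)^[n] x ≠ 0 := by
  intro h
  apply hx
  have h0 : (⇑e)^[n] (0 : S) = 0 := iter_map_fix e (map_zero e) n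
  exact iter_map_inj e n (h.trans h0.symm)

end AuxBasic

section AuxFrac

variable {R : Type} [CommRing R] [IsDomain R]

lemma algQX_inj : Function.Injective (algebraMap (Polynomial R) (QX R)) :=
  IsFractionRing.injective _ _

lemma algQX_ne_zero {f : Polynomial R} (hf : f ≠ 0) :
    algebraMap (Polynomial R) (QX R) f ≠ 0 := by
  intro h
  exact hf (algQX_inj (h.trans (map_zero _).symm))

end AuxFrac

namespace OreAlg

variable {R : Type} [CommRing R] [IsDomain R] {A : Type} [Ring A] (O : OreAlg R A)

lemma lc_eq_coeff (P : A) : O.lc P = O.coeff P (O.ord P) := rfl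



lemma sig_symm_iter_sig_iter (n : ℕ) (x : Polynomial R) :
    (⇑O.σ.symm)^[n] ((⇑O.σ)^[n] x) = x := by
  have h : Function.LeftInverse ⇑O.σ.symm ⇑O.σ := O.σ.symm_apply_apply
  exact (h.iterate n) x

lemma sig_symm_fix_C (a : R) : O.σ.symm (C a) = C a := by
  conv_lhs => rw [← O.σ_fix a]
  exact O.σ.symm_apply_apply _

lemma coeff_zero' (i : ℕ) : O.coeff 0 i = 0 := by
  have h := O.coeff_add 0 0 i
  rw [add_zero] at h
  exact (left_eq_add.mp h)

lemma eq_zero_iff_coeff (P : A) : P = 0 ↔ ∀ i, O.coeff P i = 0 := by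
  constructor
  · rintro rfl i; exact O.coeff_zero' i
  · intro h
    exact O.coeff_inj P 0 (fun i => by rw [h i, O.coeff_zero'])

lemma bddAbove_coeffSet (P : A) : BddAbove {i | O.coeff P i ≠ 0} := by
  obtain ⟨N, hN⟩ := O.coeff_bdd P
  exact ⟨N, fun i hi => by
    by_contra h
    exact hi (hN i (lt_of_not_ge h))⟩

lemma lc_ne_zero {P : A} (hP : P ≠ 0) : O.coeff P (O.ord P) ≠ 0 := by
  have hne : {i | O.coeff P i ≠ 0}.Nonempty := by
    by_contra h
    rw [Set.not_nonempty_iff_eq_empty] at h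
    apply hP
    rw [O.eq_zero_iff_coeff]
    intro i
    by_contra hi
    exact absurd (Set.eq_empty_iff_forall_notMem.mp h i) (fun h' => h' hi)
  exact Nat.sSup_mem hne (O.bddAbove_coeffSet P)


lemma lc_poly_ne_zero {P : A} (hP : P ≠ 0) {t : Polynomial R}
    (ht : O.lc P = algebraMap (Polynomial R) (QX R) t) : t ≠ 0 := by
  intro h
  exact O.lc_ne_zero hP (ht.trans (by rw [h, map_zero]))

lemma coeff_eq_zero_of_ord_lt {P : A} {j : ℕ} (h : O.ord P < j) :
    O.coeff P j = 0 := by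
  by_contra hj
  exact absurd (le_csSup (O.bddAbove_coeffSet P) (by exact hj)) (not_le.mpr h)

lemma ord_eq_of {P : A} {n : ℕ} (hn : O.coeff P n ≠ 0)
    (h : ∀ j, n < j → O.coeff P j = 0) : O.ord P = n := by
  refine le_antisymm ?_ (le_csSup (O.bddAbove_coeffSet P) hn)
  refine csSup_le ⟨n, hn⟩ (fun i hi => ?_)
  by_contra hlt
  exact hi (h i (lt_of_not_ge hlt))

lemma ne_zero_of_coeff {P : A} {n : ℕ} (hn : O.coeff P n ≠ 0) : P ≠ 0 := by
  intro h
  rw [h, O.coeff_zero'] at hn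
  exact hn rfl

lemma expand (P : A) (N : ℕ) (h : ∀ j, N < j → O.coeff P j = 0) :
    P = ∑ i ∈ Finset.range (N + 1), O.ι (O.coeff P i) * O.D ^ i :=
  O.coeff_inj _ _ (fun j => (O.coeff_mk N _ h j).symm)

lemma coeff_finset_sum {ι : Type} (s : Finset ι) (f : ι → A) (j : ℕ) :
    O.coeff (∑ i ∈ s, f i) j = ∑ i ∈ s, O.coeff (f i) j := by
  classical
  induction s using Finset.cons_induction_on with
  | empty => simp [O.coeff_zero']
  | cons _ _ hx ih =>
      rw [Finset.sum_cons, Finset.sum_cons, O.coeff_add, ih]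

end OreAlg

namespace OreAlg

variable {R : Type} [CommRing R] [IsDomain R] {A : Type} [Ring A] (O : OreAlg R A)

local notation "Φ" => algebraMap (Polynomial R) (QX R)

lemma delta_zero : O.δ 0 = 0 := by
  have h := O.δ_add 0 0
  rw [add_zero] at h
  exact (left_eq_add.mp h)


lemma D_mul_coeff {T : A} (hB : O.InB T) {N : ℕ}
    (hN : ∀ j, N < j → O.coeff T j = 0) :
    O.InB (O.D * T) ∧ (∀ j, N + 1 < j → O.coeff (O.D * T) j = 0) ∧
    (∀ t : Polynomial R, O.coeff T N = Φ t →
      O.coeff (O.D * T) (N + 1) = Φ (O.σ t)) := by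
  choose f hf using hB
  have hf0 : ∀ j, N < j → f j = 0 := by
    intro j hj
    apply algQX_inj
    rw [← hf j, hN j hj, map_zero]
  set g : ℕ → Polynomial R := fun j => match j with
    | 0 => O.δ (f 0)
    | (n+1) => O.σ (f n) + O.δ (f (n+1)) with hg
  have hgbd : ∀ j, N + 1 < j → (fun j => Φ (g j)) j = 0 := by
    intro j hj
    match j, hj with
    | (n+1), hj =>
      have h1 : f n = 0 := hf0 n (by omega)
      have h2 : f (n+1) = 0 := hf0 (n+1) (by omega)
      simp only [hg, h1, h2, map_zero, O.delta_zero, add_zero]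
  have key : O.D * T = ∑ j ∈ Finset.range (N + 2), O.ι (Φ (g j)) * O.D ^ j := by
    have hT : T = ∑ i ∈ Finset.range (N + 1), O.ι (Φ (f i)) * O.D ^ i := by
      rw [O.expand T N hN]
      exact Finset.sum_congr rfl (fun i _ => by rw [hf i])
    calc O.D * T = ∑ i ∈ Finset.range (N + 1), O.D * (O.ι (Φ (f i)) * O.D ^ i) := by
          rw [← Finset.mul_sum, ← hT]
      _ = ∑ i ∈ Finset.range (N + 1),
            (O.ι (Φ (O.σ (f i))) * O.D ^ (i+1) + O.ι (Φ (O.δ (f i))) * O.D ^ i) := by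
          refine Finset.sum_congr rfl (fun i _ => ?_)
          rw [← mul_assoc, O.comm_rule, add_mul, mul_assoc, ← pow_succ']
      _ = (∑ i ∈ Finset.range (N + 1), O.ι (Φ (O.σ (f i))) * O.D ^ (i+1))
          + ∑ i ∈ Finset.range (N + 1), O.ι (Φ (O.δ (f i))) * O.D ^ i := by
          rw [Finset.sum_add_distrib]
      _ = ∑ j ∈ Finset.range (N + 2), O.ι (Φ (g j)) * O.D ^ j := by
          rw [Finset.sum_range_succ' (fun j => O.ι (Φ (g j)) * O.D ^ j) (N+1)]
          have hgsplit : ∀ i, O.ι (Φ (g (i+1))) * O.D ^ (i+1)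
              = O.ι (Φ (O.σ (f i))) * O.D ^ (i+1) + O.ι (Φ (O.δ (f (i+1)))) * O.D ^ (i+1) := by
            intro i
            simp only [hg, map_add, add_mul]
          rw [Finset.sum_congr rfl (fun i _ => hgsplit i), Finset.sum_add_distrib]
          have hdelta : (∑ i ∈ Finset.range (N + 1), O.ι (Φ (O.δ (f (i+1)))) * O.D ^ (i+1))
              + O.ι (Φ (g 0)) * O.D ^ 0
              = ∑ i ∈ Finset.range (N + 1), O.ι (Φ (O.δ (f i))) * O.D ^ i := by
            have h0 : (g 0) = O.δ (f 0) := rfl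
            rw [h0, ← Finset.sum_range_succ' (fun j => O.ι (Φ (O.δ (f j))) * O.D ^ j) (N+1)]
            rw [Finset.sum_range_succ]
            have : f (N+1) = 0 := hf0 (N+1) (by omega)
            rw [this, O.delta_zero, map_zero, map_zero, zero_mul, add_zero]
          rw [add_assoc, hdelta]
  have hco : ∀ j, O.coeff (O.D * T) j = Φ (g j) := by
    intro j
    rw [key]
    have := O.coeff_mk (N + 1) (fun j => Φ (g j)) hgbd j
    exact this
  refine ⟨fun j => ⟨g j, hco j⟩, fun j hj => by rw [hco j]; exact hgbd j hj, ?_⟩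
  intro t ht
  have hft : f N = t := algQX_inj (by rw [← hf N, ht])
  rw [hco (N+1)]
  have : g (N+1) = O.σ (f N) + O.δ (f (N+1)) := rfl
  rw [this, hf0 (N+1) (by omega), O.delta_zero, add_zero, hft]

lemma D_mul_facts {T : A} (hB : O.InB T) (hT : T ≠ 0) {t : Polynomial R}
    (ht : O.lc T = Φ t) :
    O.InB (O.D * T) ∧ O.D * T ≠ 0 ∧ O.ord (O.D * T) = O.ord T + 1 ∧
    O.lc (O.D * T) = Φ (O.σ t) := by
  obtain ⟨h1, h2, h3⟩ := O.D_mul_coeff hB (fun j hj => O.coeff_eq_zero_of_ord_lt hj)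
  have htne : t ≠ 0 := by
    intro h
    rw [h, map_zero] at ht
    exact O.lc_ne_zero hT ht
  have htop : O.coeff (O.D * T) (O.ord T + 1) = Φ (O.σ t) := h3 t ht
  have hne : O.coeff (O.D * T) (O.ord T + 1) ≠ 0 := by
    rw [htop]
    exact algQX_ne_zero (fun h => htne (O.σ.injective (h.trans (map_zero _).symm)))
  have hord : O.ord (O.D * T) = O.ord T + 1 := O.ord_eq_of hne h2
  refine ⟨h1, O.ne_zero_of_coeff hne, hord, ?_⟩
  rw [O.lc_eq_coeff, hord]
  exact htop

lemma Dpow_mul_facts (s : ℕ) {T : A} (hB : O.InB T) (hT : T ≠ 0) {t : Polynomial R}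
    (ht : O.lc T = Φ t) :
    O.InB (O.D ^ s * T) ∧ O.D ^ s * T ≠ 0 ∧ O.ord (O.D ^ s * T) = O.ord T + s ∧
    O.lc (O.D ^ s * T) = Φ ((⇑O.σ)^[s] t) := by
  induction s with
  | zero =>
      rw [pow_zero, one_mul]
      exact ⟨hB, hT, by omega, by simpa using ht⟩
  | succ s ih =>
      obtain ⟨h1, h2, h3, h4⟩ := ih
      have hmul : O.D ^ (s+1) * T = O.D * (O.D ^ s * T) := by
        rw [pow_succ', mul_assoc]
      obtain ⟨g1, g2, g3, g4⟩ := O.D_mul_facts h1 h2 h4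
      refine ⟨by rwa [hmul], by rwa [hmul], ?_, ?_⟩
      · rw [hmul, g3, h3]; omega
      · rw [hmul, g4, Function.iterate_succ_apply']

lemma ιp_mul_coeff (s : Polynomial R) (T : A) (j : ℕ) :
    O.coeff (O.ιp s * T) j = Φ s * O.coeff T j :=
  O.coeff_smul _ _ _

lemma ιp_mul_facts {s : Polynomial R} (hs : s ≠ 0) {T : A} (hB : O.InB T) (hT : T ≠ 0)
    {t : Polynomial R} (ht : O.lc T = Φ t) :
    O.InB (O.ιp s * T) ∧ O.ιp s * T ≠ 0 ∧ O.ord (O.ιp s * T) = O.ord T ∧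
    O.lc (O.ιp s * T) = Φ (s * t) := by
  have hco : ∀ j, O.coeff (O.ιp s * T) j = Φ s * O.coeff T j := O.ιp_mul_coeff s T
  have hB' : O.InB (O.ιp s * T) := by
    intro j
    obtain ⟨u, hu⟩ := hB j
    exact ⟨s * u, by rw [hco j, hu, map_mul]⟩
  have htc : O.coeff T (O.ord T) = Φ t := ht
  have htop : O.coeff (O.ιp s * T) (O.ord T) = Φ (s * t) := by
    rw [hco (O.ord T), htc, map_mul]
  have hne : O.coeff (O.ιp s * T) (O.ord T) ≠ 0 := by
    rw [htop]
    apply algQX_ne_zero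
    exact mul_ne_zero hs (O.lc_poly_ne_zero hT ht)
  have hbd : ∀ j, O.ord T < j → O.coeff (O.ιp s * T) j = 0 := by
    intro j hj
    rw [hco, O.coeff_eq_zero_of_ord_lt hj, mul_zero]
  have hord : O.ord (O.ιp s * T) = O.ord T := O.ord_eq_of hne hbd
  refine ⟨hB', O.ne_zero_of_coeff hne, hord, ?_⟩
  rw [O.lc_eq_coeff, hord]
  exact htop

end OreAlg

namespace OreAlg

variable {R : Type} [CommRing R] [IsDomain R] {A : Type} [Ring A] (O : OreAlg R A)

local notation "Φ" => algebraMap (Polynomial R) (QX R)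

lemma ord_zero : O.ord (0 : A) = 0 := by
  have h : {i | O.coeff (0 : A) i ≠ 0} = ∅ := by
    ext i; simp [O.coeff_zero']
  show sSup {i | O.coeff (0 : A) i ≠ 0} = 0
  rw [h, csSup_empty]
  rfl

lemma mul_facts {P T : A} (hP : P ≠ 0) (hB : O.InB T) (hT : T ≠ 0)
    {t : Polynomial R} (ht : O.lc T = Φ t) :
    O.ord (P * T) = O.ord P + O.ord T ∧
    O.coeff (P * T) (O.ord P + O.ord T)
      = O.coeff P (O.ord P) * Φ ((⇑O.σ)^[O.ord P] t) ∧
    P * T ≠ 0 := by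
  set K := O.ord P with hK
  have hPex : P = ∑ i ∈ Finset.range (K+1), O.ι (O.coeff P i) * O.D ^ i :=
    O.expand P K (fun j hj => O.coeff_eq_zero_of_ord_lt hj)
  have hco : ∀ j, O.coeff (P * T) j
      = ∑ i ∈ Finset.range (K+1), O.coeff P i * O.coeff (O.D ^ i * T) j := by
    intro j
    conv_lhs => rw [hPex]
    rw [Finset.sum_mul, O.coeff_finset_sum]
    refine Finset.sum_congr rfl (fun i _ => ?_)
    rw [mul_assoc, O.coeff_smul]
  have hD : ∀ i : ℕ, O.ord (O.D ^ i * T) = O.ord T + i ∧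
      O.lc (O.D ^ i * T) = Φ ((⇑O.σ)^[i] t) :=
    fun i => ⟨(O.Dpow_mul_facts i hB hT ht).2.2.1, (O.Dpow_mul_facts i hB hT ht).2.2.2⟩
  have hbd : ∀ j, K + O.ord T < j → O.coeff (P * T) j = 0 := by
    intro j hj
    rw [hco j]
    refine Finset.sum_eq_zero (fun i hi => ?_)
    have hlt : O.ord (O.D ^ i * T) < j := by
      rw [(hD i).1]
      have := Finset.mem_range.mp hi
      omega
    rw [O.coeff_eq_zero_of_ord_lt hlt, mul_zero]
  have hzero : ∀ i ∈ Finset.range (K+1), i ≠ K →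
      O.coeff P i * O.coeff (O.D ^ i * T) (K + O.ord T) = 0 := by
    intro i hi hne
    have hiK : i < K :=
      lt_of_le_of_ne (Nat.lt_succ_iff.mp (Finset.mem_range.mp hi)) hne
    have hlt : O.ord (O.D ^ i * T) < K + O.ord T := by
      rw [(hD i).1]; omega
    rw [O.coeff_eq_zero_of_ord_lt hlt, mul_zero]
  have htop : O.coeff (P * T) (K + O.ord T) = O.coeff P K * Φ ((⇑O.σ)^[K] t) := by
    rw [hco, Finset.sum_eq_single_of_mem K (Finset.self_mem_range_succ K) hzero]
    congr 1
    have h2 := (hD K).2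
    rw [O.lc_eq_coeff, (hD K).1] at h2
    rw [Nat.add_comm K (O.ord T)]
    exact h2
  have hne : O.coeff (P * T) (K + O.ord T) ≠ 0 := by
    rw [htop]
    exact mul_ne_zero (O.lc_ne_zero hP)
      (algQX_ne_zero (iter_map_ne_zero O.σ K (O.lc_poly_ne_zero hT ht)))
  exact ⟨O.ord_eq_of hne hbd, htop, O.ne_zero_of_coeff hne⟩

lemma twist_shift {a r : ℕ} (h : r ≤ a) (n : ℕ) (t : Polynomial R) :
    (⇑O.σ.symm)^[a + n - r] ((⇑O.σ)^[n] t) = (⇑O.σ.symm)^[a - r] t := by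
  have he : a + n - r = (a - r) + n := by omega
  rw [he, Function.iterate_add_apply, O.sig_symm_iter_sig_iter]

lemma desing_ne_zero {L T : A} {r m : ℕ} {c : R} {p : Fin m → Polynomial R}
    {e : Fin m → ℕ} (hr : 0 < r) (hd : O.Desing L r m c p e T) : T ≠ 0 := by
  intro h
  have := hd.2.1
  rw [h, O.ord_zero] at this
  omega

lemma desing_Dpow {L T : A} {r m : ℕ} {c : R} {p : Fin m → Polynomial R}
    {e : Fin m → ℕ} (hr : 0 < r) (hd : O.Desing L r m c p e T) (s : ℕ)
    {t : Polynomial R} (ht : O.lc T = Φ t) :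
    O.Desing L r m c p e (O.D ^ s * T) ∧ O.ord (O.D ^ s * T) = O.ord T + s ∧
    O.lc (O.D ^ s * T) = Φ ((⇑O.σ)^[s] t) ∧
    (⇑O.σ.symm)^[O.ord (O.D ^ s * T) - r] ((⇑O.σ)^[s] t)
      = (⇑O.σ.symm)^[O.ord T - r] t := by
  obtain ⟨⟨hInB, Q, hQ⟩, hord, a, b, k, t₁, l, hb, hk, hlcT, hlcL, heq, hnr⟩ := hd
  have hT0 : T ≠ 0 := by
    intro h
    rw [h, O.ord_zero] at hord
    omega
  obtain ⟨B1, B2, B3, B4⟩ := O.Dpow_mul_facts s hInB hT0 ht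
  have ht₁ : t₁ = t := algQX_inj (hlcT.symm.trans ht)
  subst ht₁
  have htw : (⇑O.σ.symm)^[O.ord (O.D ^ s * T) - r] ((⇑O.σ)^[s] t₁)
      = (⇑O.σ.symm)^[O.ord T - r] t₁ := by
    rw [B3, O.twist_shift hord]
  refine ⟨⟨⟨B1, O.D ^ s * Q, by rw [hQ, mul_assoc]⟩, by omega,
    a, b, k, (⇑O.σ)^[s] t₁, l, hb, hk, B4, hlcL, by rw [htw]; exact heq, hnr⟩,
    B3, B4, htw⟩

end OreAlg

lemma IsPrimitive.ne_zero' {R : Type} [CommRing R] [IsDomain R] {g : Polynomial R}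
    (hg : g.IsPrimitive) : g ≠ 0 := by
  intro h
  have : IsUnit (0 : R) := hg 0 (by rw [h, map_zero])
  exact not_isUnit_zero this

namespace OreAlg

variable {R : Type} [CommRing R] [IsDomain R] {A : Type} [Ring A] (O : OreAlg R A)

local notation "Φ" => algebraMap (Polynomial R) (QX R)

lemma sig_symm_iter_C_mul (n : ℕ) (s : R) (x : Polynomial R) :
    (⇑O.σ.symm)^[n] (C s * x) = C s * (⇑O.σ.symm)^[n] x := by
  rw [iter_map_mul O.σ.symm, iter_map_fix O.σ.symm (O.sig_symm_fix_C s)]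

lemma sum_facts {ι : Type} (s : Finset ι) (F : ι → A) (M : ℕ)
    (hB : ∀ i, O.InB (F i)) (hbd : ∀ i, ∀ j, M < j → O.coeff (F i) j = 0)
    (τ : ι → Polynomial R) (htop : ∀ i, O.coeff (F i) M = Φ (τ i)) :
    O.InB (∑ i ∈ s, F i) ∧ (∀ j, M < j → O.coeff (∑ i ∈ s, F i) j = 0) ∧
    O.coeff (∑ i ∈ s, F i) M = Φ (∑ i ∈ s, τ i) := by
  refine ⟨?_, ?_, ?_⟩
  · intro j
    have hsum : O.coeff (∑ i ∈ s, F i) j = ∑ i ∈ s, O.coeff (F i) j :=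
      O.coeff_finset_sum s F j
    choose f hf using fun i => hB i j
    refine ⟨∑ i ∈ s, f i, ?_⟩
    rw [hsum, map_sum]
    exact Finset.sum_congr rfl (fun i _ => hf i)
  · intro j hj
    rw [O.coeff_finset_sum]
    exact Finset.sum_eq_zero (fun i _ => hbd i j hj)
  · rw [O.coeff_finset_sum, map_sum]
    exact Finset.sum_congr rfl (fun i _ => htop i)

section Clauses

variable {L : A} {r m : ℕ} {c : R} {p : Fin m → Polynomial R} {e : Fin m → ℕ}
  {g : Polynomial R}

lemma desingConsts_smul (hr : 0 < r) (s a : R)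
    (ha : a ∈ O.DesingConsts L r m c p e g) :
    s * a ∈ O.DesingConsts L r m c p e g := by
  rcases ha with h0 | ⟨T, t, hd, hlc, htw⟩
  · exact Or.inl (by rw [h0, mul_zero])
  by_cases hs : s = 0
  · exact Or.inl (by rw [hs, zero_mul])
  obtain ⟨⟨hInB, Q, hQ⟩, hord, a₁, b₁, k₁, t₁, l₁, hb₁, hk₁, hlcT₁, hlcL₁, heq₁, hnr₁⟩ := hd
  have hT0 : T ≠ 0 := by
    intro h; rw [h, O.ord_zero] at hord; omega
  have ht₁ : t₁ = t := algQX_inj (hlcT₁.symm.trans hlc)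
  subst ht₁
  obtain ⟨B1, B2, B3, B4⟩ :=
    O.ιp_mul_facts (s := C s) (Polynomial.C_ne_zero.mpr hs) hInB hT0 hlcT₁
  right
  refine ⟨O.ιp (C s) * T, C s * t₁, ?_, B4, ?_⟩
  · refine ⟨⟨B1, O.ιp (C s) * Q, by rw [hQ, mul_assoc]⟩, by omega,
      s * a₁, b₁, k₁, C s * t₁, l₁, hb₁, hk₁, B4, hlcL₁, ?_, hnr₁⟩
    rw [B3, O.sig_symm_iter_C_mul, mul_assoc, heq₁, ← mul_assoc, ← Polynomial.C_mul]
  · rw [B3, O.sig_symm_iter_C_mul, htw, ← mul_assoc, ← Polynomial.C_mul]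

lemma desingConsts_add (hr : 0 < r) (hg : g.IsPrimitive) (a b : R)
    (ha : a ∈ O.DesingConsts L r m c p e g)
    (hb : b ∈ O.DesingConsts L r m c p e g) :
    a + b ∈ O.DesingConsts L r m c p e g := by
  rcases ha with h0 | ⟨Ta, ta, hdA, hlcA, htwA⟩
  · rwa [h0, zero_add]
  rcases hb with h0 | ⟨Tb, tb, hdB, hlcB, htwB⟩
  · rw [h0, add_zero]
    exact Or.inr ⟨Ta, ta, hdA, hlcA, htwA⟩
  by_cases hab : a + b = 0
  · exact Or.inl hab
  by_cases ha0 : a = 0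
  · -- then use Tb with constant b = a + b (since a = 0)
    subst ha0
    rw [zero_add]
    exact Or.inr ⟨Tb, tb, hdB, hlcB, htwB⟩
  -- main case
  set Na := O.ord Ta with hNa
  set Nb := O.ord Tb with hNb
  set K := max Na Nb with hK
  obtain ⟨hdA', hordA', hlcA', htwA'⟩ := O.desing_Dpow hr hdA (K - Na) hlcA
  obtain ⟨hdB', hordB', hlcB', htwB'⟩ := O.desing_Dpow hr hdB (K - Nb) hlcB
  set TA := O.D ^ (K - Na) * Ta
  set TB := O.D ^ (K - Nb) * Tb
  set tA := (⇑O.σ)^[K - Na] ta with htA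
  set tB := (⇑O.σ)^[K - Nb] tb with htB
  have hrNa : r ≤ Na := hdA.2.1
  have hrNb : r ≤ Nb := hdB.2.1
  have hKA : O.ord TA = K := by rw [hordA']; omega
  have hKB : O.ord TB = K := by rw [hordB']; omega
  have htwA2 : (⇑O.σ.symm)^[K - r] tA = C a * g := by
    rw [← hKA, htwA', htwA]
  have htwB2 : (⇑O.σ.symm)^[K - r] tB = C b * g := by
    rw [← hKB, htwB', htwB]
  have htwsum : (⇑O.σ.symm)^[K - r] (tA + tB) = C (a + b) * g := by
    rw [iter_map_add O.σ.symm, htwA2, htwB2, Polynomial.C_add, add_mul]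
  have htsum_ne : tA + tB ≠ 0 := by
    intro h
    have h2 : (C (a + b) : Polynomial R) * g ≠ 0 :=
      mul_ne_zero (Polynomial.C_ne_zero.mpr hab) (IsPrimitive.ne_zero' hg)
    apply h2
    rw [← htwsum, h]
    exact iter_map_fix O.σ.symm (map_zero O.σ.symm) (K - r)
  -- coefficients of the sum
  have hcoadd : ∀ j, O.coeff (TA + TB) j = O.coeff TA j + O.coeff TB j :=
    fun j => O.coeff_add TA TB j
  have hbdA : ∀ j, K < j → O.coeff TA j = 0 := by
    intro j hj; exact O.coeff_eq_zero_of_ord_lt (by rw [hKA]; omega)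
  have hbdB : ∀ j, K < j → O.coeff TB j = 0 := by
    intro j hj; exact O.coeff_eq_zero_of_ord_lt (by rw [hKB]; omega)
  have htopsum : O.coeff (TA + TB) K = Φ (tA + tB) := by
    have h1 : O.coeff TA K = Φ tA := by rw [← hKA]; exact hlcA'
    have h2 : O.coeff TB K = Φ tB := by rw [← hKB]; exact hlcB'
    rw [hcoadd, h1, h2, map_add]
  have hne : O.coeff (TA + TB) K ≠ 0 := by
    rw [htopsum]; exact algQX_ne_zero htsum_ne
  have hbdsum : ∀ j, K < j → O.coeff (TA + TB) j = 0 := by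
    intro j hj; rw [hcoadd, hbdA j hj, hbdB j hj, add_zero]
  have hordsum : O.ord (TA + TB) = K := O.ord_eq_of hne hbdsum
  have hlcsum : O.lc (TA + TB) = Φ (tA + tB) := by
    rw [O.lc_eq_coeff, hordsum]; exact htopsum
  -- Desing data from TA
  obtain ⟨⟨hInBA, QA, hQA⟩, hordA2, a₁, b₁, k₁, t₁, l₁, hb₁, hk₁, hlcT₁, hlcL₁, heq₁, hnr₁⟩ := hdA'
  obtain ⟨⟨hInBB, QB, hQB⟩, _, _⟩ := hdB'
  have ht₁ : t₁ = tA := algQX_inj (hlcT₁.symm.trans hlcA')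
  subst ht₁
  have heq₁' : (C a * g) * (C b₁ * ∏ i, p i ^ k₁ i) = C a₁ * l₁ := by
    rw [← htwA2, ← hKA]
    exact heq₁
  right
  refine ⟨TA + TB, tA + tB, ?_, hlcsum, by rw [hordsum, htwsum]⟩
  refine ⟨⟨?_, QA + QB, by rw [add_mul, hQA, hQB]⟩, by rw [hordsum]; omega,
    (a + b) * a₁, a * b₁, k₁, tA + tB, l₁,
    mul_ne_zero ha0 hb₁, hk₁, hlcsum, hlcL₁, ?_, hnr₁⟩
  · intro j
    obtain ⟨u, hu⟩ := hInBA j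
    obtain ⟨v, hv⟩ := hInBB j
    exact ⟨u + v, by rw [hcoadd j, hu, hv, map_add]⟩
  · rw [hordsum, htwsum, Polynomial.C_mul, Polynomial.C_mul]
    calc C (a + b) * g * (C a * C b₁ * ∏ i, p i ^ k₁ i)
        = C (a + b) * ((C a * g) * (C b₁ * ∏ i, p i ^ k₁ i)) := by ring
      _ = C (a + b) * (C a₁ * l₁) := by rw [heq₁']
      _ = C (a + b) * C a₁ * l₁ := by ring

end Clauses

end OreAlg

section DvdLemmas

lemma prime_pow_dvd_bound {α : Type} [CommMonoidWithZero α] [IsCancelMulZero α] {q aa : α} {n E : ℕ}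
    (hq : Prime q) (hna : ¬ q ∣ aa) (h : q ^ n ∣ aa * q ^ E) : n ≤ E := by
  have h2 : q ^ n ∣ q ^ E := hq.pow_dvd_of_dvd_mul_left n hna h
  exact (pow_dvd_pow_iff hq.ne_zero hq.not_unit).mp h2

lemma poly_not_dvd_C {R : Type} [CommRing R] [IsDomain R] {q : Polynomial R}
    (hdeg : 0 < q.natDegree) {b : R} (hb : b ≠ 0) : ¬ q ∣ C b := by
  intro h
  have := Polynomial.natDegree_le_of_dvd h (Polynomial.C_ne_zero.mpr hb)
  rw [Polynomial.natDegree_C] at this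
  omega

end DvdLemmas

section FracPoly

variable {R : Type} [CommRing R]

lemma phi_inj [IsDomain R] :
    Function.Injective (Polynomial.map (algebraMap R (FractionRing R))) :=
  Polynomial.map_injective _ (IsFractionRing.injective R (FractionRing R))

lemma phi0_inj [IsDomain R] : Function.Injective (algebraMap R (FractionRing R)) :=
  IsFractionRing.injective R (FractionRing R)

lemma phi0_ne_zero [IsDomain R] {b : R} (hb : b ≠ 0) : algebraMap R (FractionRing R) b ≠ 0 :=
  fun h => hb (phi0_inj (h.trans (map_zero _).symm))

lemma phi_C_unit [IsDomain R] {b : R} (hb : b ≠ 0) :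
    IsUnit (C (algebraMap R (FractionRing R) b)) :=
  Polynomial.isUnit_C.mpr (isUnit_iff_ne_zero.mpr (phi0_ne_zero hb))

lemma exists_denom [IsDomain R] (f' : Polynomial (FractionRing R)) :
    ∃ (f : Polynomial R) (b : R), b ≠ 0 ∧
      Polynomial.map (algebraMap R (FractionRing R)) f
        = C (algebraMap R (FractionRing R) b) * f' := by
  obtain ⟨b, hb⟩ :=
    IsLocalization.integerNormalization_map_to_map (R := R)
      (S := FractionRing R) (nonZeroDivisors R) f'
  refine ⟨IsLocalization.integerNormalization (nonZeroDivisors R) f', b,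
    mem_nonZeroDivisors_iff_ne_zero.mp b.2, ?_⟩
  rw [hb]
  ext n
  rw [Polynomial.coeff_C_mul, Polynomial.coeff_smul, Algebra.smul_def]

lemma phi_ne_zero [IsDomain R] {q : Polynomial R} (hq : q ≠ 0) :
    q.map (algebraMap R (FractionRing R)) ≠ 0 :=
  fun h => hq (phi_inj (h.trans (Polynomial.map_zero _).symm))

lemma prime_map [IsDomain R] {q : Polynomial R} (hq : Prime q) (hdeg : 0 < q.natDegree) :
    Prime (q.map (algebraMap R (FractionRing R))) := by
  refine ⟨phi_ne_zero hq.ne_zero, ?_, ?_⟩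
  · intro hu
    obtain ⟨u, hu', hC⟩ := Polynomial.isUnit_iff.mp hu
    have h0 : (q.map (algebraMap R (FractionRing R))).natDegree = 0 := by
      rw [← hC, Polynomial.natDegree_C]
    rw [Polynomial.natDegree_map_eq_of_injective phi0_inj] at h0
    omega
  · intro f' g' hdvd
    obtain ⟨h', hh⟩ := hdvd
    obtain ⟨f, bf, hbf, hf⟩ := exists_denom f'
    obtain ⟨gg, bg, hbg, hg⟩ := exists_denom g'
    obtain ⟨h, bh, hbh, hh'⟩ := exists_denom h'
    have key : Polynomial.map (algebraMap R (FractionRing R)) (C bh * f * gg)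
        = Polynomial.map (algebraMap R (FractionRing R)) (C bf * C bg * q * h) := by
      simp only [Polynomial.map_mul, Polynomial.map_C]
      rw [hf, hg, hh']
      linear_combination (C ((algebraMap R (FractionRing R)) bh)
        * C ((algebraMap R (FractionRing R)) bf)
        * C ((algebraMap R (FractionRing R)) bg)) * hh
    have heqR : C bh * f * gg = C bf * C bg * q * h := phi_inj key
    have hqdvd : q ∣ C bh * (f * gg) := ⟨C bf * C bg * h, by
      rw [show C bh * (f * gg) = C bh * f * gg from by ring, heqR]; ring⟩
    have hnC : ¬ q ∣ C bh := poly_not_dvd_C hdeg hbh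
    have hfg : q ∣ f * gg := by
      rcases hq.2.2 _ _ hqdvd with h1 | h1
      · exact absurd h1 hnC
      · exact h1
    rcases hq.2.2 _ _ hfg with h1 | h1
    · left
      have hdv : Polynomial.map (algebraMap R (FractionRing R)) q
          ∣ Polynomial.map (algebraMap R (FractionRing R)) f :=
        Polynomial.map_dvd _ h1
      obtain ⟨u, hu⟩ := phi_C_unit (R := R) hbf
      have hf2 : f' = ↑u⁻¹ * Polynomial.map (algebraMap R (FractionRing R)) f := by
        rw [hf, ← hu, ← mul_assoc, Units.inv_mul, one_mul]
      rw [hf2]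
      exact Dvd.dvd.mul_left hdv _
    · right
      have hdv : Polynomial.map (algebraMap R (FractionRing R)) q
          ∣ Polynomial.map (algebraMap R (FractionRing R)) gg :=
        Polynomial.map_dvd _ h1
      obtain ⟨u, hu⟩ := phi_C_unit (R := R) hbg
      have hg2 : g' = ↑u⁻¹ * Polynomial.map (algebraMap R (FractionRing R)) gg := by
        rw [hg, ← hu, ← mul_assoc, Units.inv_mul, one_mul]
      rw [hg2]
      exact Dvd.dvd.mul_left hdv _

end FracPoly

namespace OreAlg

variable {R : Type} [CommRing R] [IsDomain R] {A : Type} [Ring A] (O : OreAlg R A)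

local notation "Φ" => algebraMap (Polynomial R) (QX R)

lemma removable_le [UniqueFactorizationMonoid R] {L : A} {r m : ℕ} {c : R}
    {p : Fin m → Polynomial R} {e : Fin m → ℕ}
    (hF : O.Factored L r m c p e) (i : Fin m) (d : ℕ)
    (hrem : O.Removable L (p i ^ d)) : d ≤ e i := by
  obtain ⟨hordL, hr, hc, hlcL, hirr, hcop⟩ := hF
  rcases Nat.eq_zero_or_pos d with hd | hd
  · omega
  obtain ⟨k, P, hordP, hInB, w, v, t, l₁, hv, hcopr, hlcPL, hlcL₁, heq⟩ := hrem
  have hl₁ : l₁ = C c * ∏ j, p j ^ e j := algQX_inj (hlcL₁.symm.trans hlcL)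
  subst hl₁
  have hprime : Prime (p i) :=
    UniqueFactorizationMonoid.irreducible_iff_prime.mp (hirr i).1
  have hdvd : p i ^ d ∣ w * (C c * ∏ j, p j ^ e j) := by
    rw [← heq]
    exact ⟨(⇑O.σ.symm)^[k] t * v, by ring⟩
  have hnw : ¬ p i ∣ w := by
    intro h
    exact (hirr i).1.not_isUnit (hcopr (p i) (dvd_pow_self _ (by omega)) h)
  have hdl : p i ^ d ∣ C c * ∏ j, p j ^ e j :=
    hprime.pow_dvd_of_dvd_mul_left d hnw hdvd
  have hsplit : C c * ∏ j, p j ^ e j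
      = (C c * ∏ j ∈ Finset.univ.erase i, p j ^ e j) * p i ^ e i := by
    conv_lhs => rw [← Finset.mul_prod_erase Finset.univ _ (Finset.mem_univ i)]
    ring
  have hna : ¬ p i ∣ C c * ∏ j ∈ Finset.univ.erase i, p j ^ e j := by
    intro h
    rcases hprime.2.2 _ _ h with h1 | h2
    · exact poly_not_dvd_C (hirr i).2 hc h1
    · obtain ⟨j, hj, hdj⟩ := hprime.exists_mem_finset_dvd h2
      have hji : j ≠ i := Finset.ne_of_mem_erase hj
      have hdvdj : p i ∣ p j := hprime.dvd_of_dvd_pow hdj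
      exact (hirr i).1.not_isUnit
        (hcop i j (fun hij => hji hij.symm) (p i) dvd_rfl hdvdj)
  rw [hsplit] at hdl
  exact prime_pow_dvd_bound hprime hna hdl

lemma kappa_facts [UniqueFactorizationMonoid R] {L : A} {r m : ℕ} {c : R}
    {p : Fin m → Polynomial R} {e : Fin m → ℕ}
    (hF : O.Factored L r m c p e) (i : Fin m) :
    sSup {d | O.Removable L (p i ^ d)} ≤ e i ∧
    (∀ d, sSup {d | O.Removable L (p i ^ d)} < d → ¬ O.Removable L (p i ^ d)) ∧
    (0 < sSup {d | O.Removable L (p i ^ d)} →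
      O.Removable L (p i ^ sSup {d | O.Removable L (p i ^ d)})) := by
  set S := {d | O.Removable L (p i ^ d)} with hS
  have hbdd : BddAbove S := ⟨e i, fun d hd => O.removable_le hF i d hd⟩
  refine ⟨?_, ?_, ?_⟩
  · by_cases hne : S.Nonempty
    · exact csSup_le hne (fun d hd => O.removable_le hF i d hd)
    · rw [Set.not_nonempty_iff_eq_empty] at hne
      rw [hne, csSup_empty]
      exact Nat.zero_le _
  · intro d hd hrem
    exact absurd (le_csSup hbdd hrem) (not_le.mpr hd)
  · intro hpos
    have hne : S.Nonempty := by
      by_contra hne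
      rw [Set.not_nonempty_iff_eq_empty] at hne
      rw [hne, csSup_empty] at hpos
      exact absurd hpos (by norm_num)
    exact Nat.sSup_mem hne hbdd

end OreAlg

section UFDLemmas

variable {α : Type} [CommMonoidWithZero α] [IsCancelMulZero α]

lemma prod_pow_update {m : ℕ} (q : Fin m → α) (e : Fin m → ℕ) (i : Fin m) (n : ℕ) :
    ∏ j, q j ^ (Function.update e i n j)
      = q i ^ n * ∏ j ∈ Finset.univ.erase i, q j ^ e j := by
  rw [← Finset.mul_prod_erase Finset.univ
    (fun j => q j ^ (Function.update e i n j)) (Finset.mem_univ i)]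
  rw [Function.update_self]
  congr 1
  refine Finset.prod_congr rfl (fun j hj => ?_)
  rw [Function.update_of_ne (Finset.ne_of_mem_erase hj)]

lemma dvd_prod_pow_associated [UniqueFactorizationMonoid α] {m : ℕ}
    (q : Fin m → α) (hq : ∀ i, Prime (q i))
    (hnd : ∀ i j, i ≠ j → ¬ q i ∣ q j) :
    ∀ (n : ℕ) (e : Fin m → ℕ) (d u : α), IsUnit u → d ≠ 0 → (∑ i, e i) ≤ n →
    d ∣ u * ∏ i, q i ^ e i →
    ∃ s : Fin m → ℕ, (∀ i, s i ≤ e i) ∧ Associated d (∏ i, q i ^ s i) := by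
  intro n
  induction n with
  | zero =>
      intro e d u hu hd0 hsum hdvd
      have he : ∀ i, e i = 0 := by
        intro i
        have := Finset.single_le_sum (f := e) (fun j _ => Nat.zero_le _)
          (Finset.mem_univ i)
        omega
      have hprod : (∏ i, q i ^ e i) = 1 :=
        Finset.prod_eq_one (fun i _ => by rw [he i, pow_zero])
      rw [hprod, mul_one] at hdvd
      have hdu : IsUnit d := isUnit_of_dvd_unit hdvd hu
      exact ⟨e, fun i => le_rfl, by
        rw [hprod]
        exact associated_one_iff_isUnit.mpr hdu⟩
  | succ n ih =>
      intro e d u hu hd0 hsum hdvd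
      by_cases hdu : IsUnit d
      · refine ⟨fun _ => 0, fun i => Nat.zero_le _, ?_⟩
        have hprod : (∏ i, q i ^ (0:ℕ)) = (1:α) :=
          Finset.prod_eq_one (fun i _ => pow_zero _)
        rw [hprod]
        exact associated_one_iff_isUnit.mpr hdu
      obtain ⟨x, hxirr, hxd⟩ := WfDvdMonoid.exists_irreducible_factor hdu hd0
      have hxp : Prime x := UniqueFactorizationMonoid.irreducible_iff_prime.mp hxirr
      have hxprod : x ∣ ∏ i, q i ^ e i := by
        rcases hxp.2.2 _ _ (hxd.trans hdvd) with h1 | h1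
        · exact absurd (isUnit_of_dvd_unit h1 hu) hxirr.not_isUnit
        · exact h1
      obtain ⟨i, _, hxi⟩ := hxp.exists_mem_finset_dvd hxprod
      have hei : e i ≠ 0 := by
        intro h
        rw [h, pow_zero] at hxi
        exact hxirr.not_isUnit (isUnit_of_dvd_one hxi)
      have hxqi : x ∣ q i := hxp.dvd_of_dvd_pow hxi
      have hassoc : Associated x (q i) :=
        hxirr.associated_of_dvd (hq i).irreducible hxqi
      have hqid : q i ∣ d := hassoc.symm.dvd.trans hxd
      obtain ⟨d', hd'⟩ := hqid
      have hd'0 : d' ≠ 0 := by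
        intro h
        rw [h, mul_zero] at hd'
        exact hd0 hd'
      set e' := Function.update e i (e i - 1) with he'
      have hprodsplit : u * ∏ j, q j ^ e j = q i * (u * ∏ j, q j ^ e' j) := by
        rw [prod_pow_update]
        have : (∏ j, q j ^ e j)
            = q i ^ e i * ∏ j ∈ Finset.univ.erase i, q j ^ e j :=
          (Finset.mul_prod_erase Finset.univ (fun j => q j ^ e j)
            (Finset.mem_univ i)).symm
        rw [this, show e i = (e i - 1) + 1 from by omega, pow_succ]
        simp only [Nat.add_sub_cancel]
        simp only [mul_comm, mul_left_comm, mul_assoc]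
      have hdvd' : d' ∣ u * ∏ j, q j ^ e' j := by
        have h2 : q i * d' ∣ q i * (u * ∏ j, q j ^ e' j) := by
          rw [← hd', ← hprodsplit]
          exact hdvd
        exact (mul_dvd_mul_iff_left (hq i).ne_zero).mp h2
      have hsum' : (∑ j, e' j) ≤ n := by
        have h1 : (∑ j, e' j) = (e i - 1) + ∑ j ∈ Finset.univ.erase i, e j := by
          rw [he', ← Finset.add_sum_erase Finset.univ _ (Finset.mem_univ i),
            Function.update_self]
          congr 1
          exact Finset.sum_congr rfl
            (fun j hj => by rw [Function.update_of_ne (Finset.ne_of_mem_erase hj)])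
        have h2 : (∑ j, e j) = e i + ∑ j ∈ Finset.univ.erase i, e j :=
          (Finset.add_sum_erase Finset.univ e (Finset.mem_univ i)).symm
        omega
      obtain ⟨s', hs'le, hs'assoc⟩ := ih e' d' u hu hd'0 hsum' hdvd'
      refine ⟨Function.update s' i (s' i + 1), ?_, ?_⟩
      · intro j
        by_cases hji : j = i
        · subst hji
          rw [Function.update_self]
          have := hs'le j
          rw [he', Function.update_self] at this
          omega
        · rw [Function.update_of_ne hji]
          have := hs'le j
          rw [he', Function.update_of_ne hji] at this
          exact this
      · have hps : ∏ j, q j ^ (Function.update s' i (s' i + 1)) j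
            = q i * ∏ j, q j ^ s' j := by
          rw [prod_pow_update, pow_succ']
          have : (∏ j, q j ^ s' j)
              = q i ^ s' i * ∏ j ∈ Finset.univ.erase i, q j ^ s' j :=
            (Finset.mul_prod_erase Finset.univ (fun j => q j ^ s' j)
              (Finset.mem_univ i)).symm
          rw [this]
          simp only [mul_comm, mul_left_comm, mul_assoc]
        rw [hps, hd']
        exact Associated.mul_left (q i) hs'assoc

end UFDLemmas

section GcdChain

variable {α : Type} [EuclideanDomain α] [DecidableEq α]

lemma gcd_chain {m : ℕ} (l : α) (u : Fin m → α) :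
    ∃ dd : α, (dd ∣ l) ∧ (∀ i, dd ∣ u i) ∧ (l ≠ 0 → dd ≠ 0) ∧
      ∃ (γl : α) (γ : Fin m → α), dd = γl * l + ∑ i, γ i * u i := by
  set G : ℕ → α := fun n => Nat.rec l
    (fun n Gn => if h : n < m then EuclideanDomain.gcd Gn (u ⟨n, h⟩) else Gn) n
    with hG
  have hGsucc : ∀ n, G (n+1) = if h : n < m
      then EuclideanDomain.gcd (G n) (u ⟨n, h⟩) else G n := fun n => rfl
  have key : ∀ n, (G n ∣ l) ∧ (∀ i : Fin m, (i : ℕ) < n → G n ∣ u i) ∧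
      (l ≠ 0 → G n ≠ 0) ∧ ∃ (γl : α) (γ : Fin m → α),
        G n = γl * l + ∑ i, γ i * u i := by
    intro n
    induction n with
    | zero =>
        refine ⟨dvd_rfl, fun i hi => absurd hi (by omega), fun h => h, 1, 0, ?_⟩
        show l = 1 * l + ∑ i, (0 : Fin m → α) i * u i
        simp
    | succ n ih =>
        obtain ⟨ih1, ih2, ih3, γl, γ, ihc⟩ := ih
        rw [hGsucc n]
        by_cases h : n < m
        · rw [dif_pos h]
          have hgl : EuclideanDomain.gcd (G n) (u ⟨n, h⟩) ∣ G n :=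
            EuclideanDomain.gcd_dvd_left _ _
          refine ⟨hgl.trans ih1, ?_, ?_, ?_⟩
          · intro i hi
            by_cases hin : (i : ℕ) = n
            · have : i = ⟨n, h⟩ := Fin.ext hin
              rw [this]
              exact EuclideanDomain.gcd_dvd_right _ _
            · exact hgl.trans (ih2 i (by omega))
          · intro hl hz
            rw [EuclideanDomain.gcd_eq_zero_iff] at hz
            exact ih3 hl hz.1
          · obtain ⟨a, b, hab⟩ : ∃ a b, EuclideanDomain.gcd (G n) (u ⟨n, h⟩)
                = G n * a + u ⟨n, h⟩ * b :=
              ⟨_, _, EuclideanDomain.gcd_eq_gcd_ab _ _⟩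
            refine ⟨γl * a, fun i => γ i * a + if i = ⟨n, h⟩ then b else 0, ?_⟩
            have hsplit : ∑ i, (γ i * a + if i = ⟨n, h⟩ then b else 0) * u i
                = (∑ i, γ i * a * u i)
                  + ∑ i, (if i = ⟨n, h⟩ then b else 0) * u i := by
              rw [← Finset.sum_add_distrib]
              exact Finset.sum_congr rfl (fun i _ => by ring)
            have hite : ∑ i, (if i = ⟨n, h⟩ then b else 0) * u i
                = b * u ⟨n, h⟩ := by
              rw [Finset.sum_eq_single_of_mem ⟨n, h⟩ (Finset.mem_univ _)
                (fun i _ hne => by rw [if_neg hne, zero_mul])]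
              rw [if_pos rfl]
            rw [hab, ihc, hsplit, hite, add_mul, Finset.sum_mul]
            rw [Finset.sum_congr rfl (fun i (_ : i ∈ Finset.univ) =>
              show γ i * u i * a = γ i * a * u i from by ring)]
            ring
        · rw [dif_neg h]
          exact ⟨ih1, fun i hi => ih2 i (by omega), ih3, γl, γ, ihc⟩
  obtain ⟨h1, h2, h3, h4⟩ := key m
  exact ⟨G m, h1, fun i => h2 i i.2, h3, h4⟩

end GcdChain

section IterSum

lemma iter_map_sum {S : Type} [CommRing S] (e : S ≃+* S) (n : ℕ) {ι : Type}
    (s : Finset ι) (f : ι → S) :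
    (⇑e)^[n] (∑ i ∈ s, f i) = ∑ i ∈ s, (⇑e)^[n] (f i) := by
  classical
  induction s using Finset.cons_induction_on with
  | empty => simp [iter_map_fix e (map_zero e) n]
  | cons _ _ hx ih => rw [Finset.sum_cons, Finset.sum_cons, iter_map_add, ih]

end IterSum

section ShapeExtraction

variable {R : Type} [CommRing R]

local notation "φK" => Polynomial.map (algebraMap R (FractionRing R))
local notation "φ0" => algebraMap R (FractionRing R)

set_option maxHeartbeats 1000000 in
lemma shape_extraction [IsDomain R] [UniqueFactorizationMonoid R]
    {m : ℕ} (p : Fin m → Polynomial R) (e κ : Fin m → ℕ) (c : R) (hc : c ≠ 0)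
    (hirr : ∀ i, Irreducible (p i) ∧ 0 < (p i).natDegree)
    (hcop : ∀ i j, i ≠ j → ¬ p i ∣ p j)
    (u v w : Fin m → Polynomial R)
    (hw : ∀ i, ¬ p i ∣ w i)
    (hequ : ∀ i, u i * (v i * p i ^ κ i) = w i * (C c * ∏ j, p j ^ e j)) :
    ∃ (s : Fin m → ℕ) (cl : Polynomial R) (ci : Fin m → Polynomial R) (Acst : R),
      (∀ i, s i + κ i ≤ e i) ∧ Acst ≠ 0 ∧
      cl * (C c * ∏ j, p j ^ e j) + ∑ i, ci i * u i
        = C Acst * ∏ i, p i ^ s i := by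
  classical
  have hl0 : (C c * ∏ j, p j ^ e j : Polynomial R) ≠ 0 :=
    mul_ne_zero (Polynomial.C_ne_zero.mpr hc)
      (Finset.prod_ne_zero_iff.mpr (fun i _ => pow_ne_zero _ (hirr i).1.ne_zero))
  have hpprime : ∀ i, Prime (p i) := fun i =>
    UniqueFactorizationMonoid.irreducible_iff_prime.mp (hirr i).1
  have hP'p : ∀ i, Prime (φK (p i)) := fun i => prime_map (hpprime i) (hirr i).2
  -- descent of divisibility along φK
  have hdescend : ∀ (q f : Polynomial R), Prime q → 0 < q.natDegree →
      φK q ∣ φK f → q ∣ f := by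
    intro q f hq hdeg hdvd
    obtain ⟨q', hq'⟩ := hdvd
    obtain ⟨q₀, b, hb, hb'⟩ := exists_denom (R := R) q'
    have hkey : φK (C b * f) = φK (q * q₀) := by
      rw [Polynomial.map_mul, Polynomial.map_mul, Polynomial.map_C, hq', hb']
      ring
    have h2 : C b * f = q * q₀ := phi_inj hkey
    have h3 : q ∣ C b * f := ⟨q₀, h2⟩
    rcases hq.2.2 _ _ h3 with h4 | h4
    · exact absurd h4 (poly_not_dvd_C hdeg hb)
    · exact h4
  have hnd : ∀ i j, i ≠ j → ¬ φK (p i) ∣ φK (p j) := by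
    intro i j hij hdvd
    exact hcop i j hij (hdescend _ _ (hpprime i) (hirr i).2 hdvd)
  -- gcd of the images
  obtain ⟨dd, hddl, hddu, hdd0', γl, γ, hcomb⟩ :=
    gcd_chain (α := Polynomial (FractionRing R))
      (φK (C c * ∏ j, p j ^ e j)) (fun i => φK (u i))
  have hdd0 : dd ≠ 0 := hdd0' (phi_ne_zero hl0)
  have hφprod : ∀ (t : Fin m → ℕ),
      φK (∏ i, p i ^ t i) = ∏ i, φK (p i) ^ t i := by
    intro t
    rw [Polynomial.map_prod]
    exact Finset.prod_congr rfl (fun i _ => Polynomial.map_pow _ _)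
  have hφl : φK (C c * ∏ j, p j ^ e j) = C (φ0 c) * ∏ i, φK (p i) ^ e i := by
    rw [Polynomial.map_mul, Polynomial.map_C, hφprod e]
  obtain ⟨s, hse, hassoc⟩ :=
    dvd_prod_pow_associated (fun i => φK (p i)) hP'p hnd
      (∑ i, e i) e dd (C (φ0 c)) (phi_C_unit hc) hdd0 le_rfl
      (by rw [hφl] at hddl; exact hddl)
  -- multiplicity bound
  have hsk : ∀ i, s i + κ i ≤ e i := by
    intro i
    have h1 : φK (p i) ^ s i ∣ dd :=
      (Finset.dvd_prod_of_mem (fun j => φK (p j) ^ s j)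
        (Finset.mem_univ i)).trans hassoc.symm.dvd
    have h2 : φK (p i) ^ s i ∣ φK (u i) := h1.trans (hddu i)
    have hequK : φK (u i) * (φK (v i) * φK (p i) ^ κ i)
        = φK (w i) * (C (φ0 c) * ∏ j, φK (p j) ^ e j) := by
      have h0 := congrArg (Polynomial.map (algebraMap R (FractionRing R))) (hequ i)
      rw [Polynomial.map_mul, Polynomial.map_mul, Polynomial.map_mul,
        Polynomial.map_pow, hφl] at h0
      exact h0
    have h3 : φK (p i) ^ (s i + κ i)
        ∣ φK (w i) * (C (φ0 c) * ∏ j, φK (p j) ^ e j) := by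
      rw [← hequK, pow_add]
      exact mul_dvd_mul h2 (dvd_mul_left _ _)
    have hnw : ¬ φK (p i) ∣ φK (w i) := fun h =>
      hw i (hdescend _ _ (hpprime i) (hirr i).2 h)
    have h4 : φK (p i) ^ (s i + κ i) ∣ C (φ0 c) * ∏ j, φK (p j) ^ e j :=
      (hP'p i).pow_dvd_of_dvd_mul_left _ hnw h3
    have hsplit : C (φ0 c) * ∏ j, φK (p j) ^ e j
        = (C (φ0 c) * ∏ j ∈ Finset.univ.erase i, φK (p j) ^ e j)
          * φK (p i) ^ e i := by
      conv_lhs => rw [← Finset.mul_prod_erase Finset.univ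
        (fun j => φK (p j) ^ e j) (Finset.mem_univ i)]
      ring
    have hna : ¬ φK (p i)
        ∣ C (φ0 c) * ∏ j ∈ Finset.univ.erase i, φK (p j) ^ e j := by
      intro h
      rcases (hP'p i).2.2 _ _ h with h5 | h5
      · exact (hP'p i).not_unit (isUnit_of_dvd_unit h5 (phi_C_unit hc))
      · obtain ⟨j, hj, hdj⟩ := (hP'p i).exists_mem_finset_dvd h5
        exact hnd i j (fun hh => (Finset.ne_of_mem_erase hj) hh.symm)
          ((hP'p i).dvd_of_dvd_pow hdj)
    rw [hsplit] at h4
    exact prime_pow_dvd_bound (hP'p i) hna h4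
  -- extract the unit and clear denominators
  obtain ⟨uu, huu⟩ := hassoc
  obtain ⟨α₀, hα₀u, hCα₀⟩ := Polynomial.isUnit_iff.mp uu.isUnit
  obtain ⟨Γl, bl, hbl, hΓl⟩ := exists_denom (R := R) γl
  choose Γ bb hbb hΓ using fun i => exists_denom (R := R) (γ i)
  obtain ⟨⟨a₀, b₀⟩, hsurj0⟩ := IsLocalization.surj (nonZeroDivisors R) α₀
  have hsurj : α₀ * φ0 (↑b₀ : R) = φ0 a₀ := hsurj0
  clear hsurj0
  have hB0 : (bl * ∏ i, bb i : R) ≠ 0 :=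
    mul_ne_zero hbl (Finset.prod_ne_zero_iff.mpr (fun i _ => hbb i))
  have hconst : ∀ i, (bl * ∏ j ∈ Finset.univ.erase i, bb j) * bb i
      = bl * ∏ i, bb i := by
    intro i
    conv_rhs => rw [← Finset.mul_prod_erase Finset.univ bb (Finset.mem_univ i)]
    ring
  have hterm : ∀ i, φK ((C (bl * ∏ j ∈ Finset.univ.erase i, bb j) * Γ i) * u i)
      = C (φ0 (bl * ∏ i, bb i)) * (γ i * φK (u i)) := by
    intro i
    rw [Polynomial.map_mul, Polynomial.map_mul, Polynomial.map_C, hΓ i,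
      ← hconst i]
    simp only [map_mul, Polynomial.C_mul]
    ring
  have hφUU : φK ((C (∏ i, bb i) * Γl) * (C c * ∏ j, p j ^ e j)
      + ∑ i, (C (bl * ∏ j ∈ Finset.univ.erase i, bb j) * Γ i) * u i)
      = C (φ0 (bl * ∏ i, bb i)) * dd := by
    have h1 : φK ((C (∏ i, bb i) * Γl) * (C c * ∏ j, p j ^ e j)
        + ∑ i, (C (bl * ∏ j ∈ Finset.univ.erase i, bb j) * Γ i) * u i)
        = C (φ0 (bl * ∏ i, bb i)) * (γl * φK (C c * ∏ j, p j ^ e j))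
          + ∑ i, C (φ0 (bl * ∏ i, bb i)) * (γ i * φK (u i)) := by
      rw [Polynomial.map_add, Polynomial.map_sum,
        Finset.sum_congr rfl (fun i _ => hterm i),
        Polynomial.map_mul, Polynomial.map_mul, Polynomial.map_C, hΓl]
      congr 1
      simp only [map_mul, Polynomial.C_mul]
      ring
    rw [h1, ← Finset.mul_sum, ← mul_add, ← hcomb]
  -- final identity over R[x]
  have hkey2 : φK ((C (∏ i, bb i) * Γl * (C c * ∏ j, p j ^ e j)
        + ∑ i, C (bl * ∏ j ∈ Finset.univ.erase i, bb j) * Γ i * u i) * C a₀)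
      = φK (C (↑b₀ * (bl * ∏ i, bb i)) * ∏ i, p i ^ s i) := by
    rw [Polynomial.map_mul, Polynomial.map_C, hφUU]
    rw [Polynomial.map_mul, Polynomial.map_C, hφprod s]
    rw [← hsurj]
    have hdduu : dd * C α₀ = ∏ i, φK (p i) ^ s i := by
      rw [hCα₀]; exact huu
    simp only [map_mul, Polynomial.C_mul]
    linear_combination (C (φ0 bl) * C (φ0 (∏ i, bb i)) * C (φ0 (↑b₀ : R))) * hdduu
  have hUstar := phi_inj hkey2
  refine ⟨s, C a₀ * (C (∏ i, bb i) * Γl),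
    fun i => C a₀ * (C (bl * ∏ j ∈ Finset.univ.erase i, bb j) * Γ i),
    ↑b₀ * (bl * ∏ i, bb i), hsk,
    mul_ne_zero (mem_nonZeroDivisors_iff_ne_zero.mp b₀.2) hB0, ?_⟩
  rw [← hUstar, add_mul, Finset.sum_mul]
  congr 1
  · ring
  · exact Finset.sum_congr rfl (fun i _ => by ring)

end ShapeExtraction

namespace OreAlg

variable {R : Type} [CommRing R] [IsDomain R] {A : Type} [Ring A] (O : OreAlg R A)

local notation "Φ" => algebraMap (Polynomial R) (QX R)

lemma sig_iter_symm_le {a b : ℕ} (h : b ≤ a) (x : Polynomial R) :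
    (⇑O.σ)^[a] ((⇑O.σ.symm)^[b] x) = (⇑O.σ)^[a - b] x := by
  have ha : a = (a - b) + b := by omega
  conv_lhs => rw [ha]
  rw [Function.iterate_add_apply]
  congr 1
  have hinv : Function.LeftInverse ⇑O.σ ⇑O.σ.symm := O.σ.apply_symm_apply
  exact hinv.iterate b x

lemma exists_desing [UniqueFactorizationMonoid R] {L : A} (hL : L ≠ 0)
    (hLB : O.InB L) {r m : ℕ} {c : R} {p : Fin m → Polynomial R}
    {e : Fin m → ℕ} (hF : O.Factored L r m c p e) :
    ∃ (T : A) (t : Polynomial R), O.Desing L r m c p e T ∧ O.lc T = Φ t ∧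
      (⇑O.σ.symm)^[O.ord T - r] t ≠ 0 := by
  classical
  have hordL : O.ord L = r := hF.1
  have hr : 0 < r := hF.2.1
  have hc : c ≠ 0 := hF.2.2.1
  have hlcL : O.lc L = Φ (C c * ∏ i, p i ^ e i) := hF.2.2.2.1
  have hirr : ∀ i, Irreducible (p i) ∧ 0 < (p i).natDegree := hF.2.2.2.2.1
  have hcop : ∀ i j, i ≠ j → Copr (p i) (p j) := hF.2.2.2.2.2
  set κ : Fin m → ℕ := fun i => sSup {d | O.Removable L (p i ^ d)} with hκdef
  have hκ1 : ∀ i, κ i ≤ e i := fun i => (O.kappa_facts hF i).1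
  have hκ2 : ∀ i d, κ i < d → ¬ O.Removable L (p i ^ d) :=
    fun i => (O.kappa_facts hF i).2.1
  have hκ3 : ∀ i, 0 < κ i → O.Removable L (p i ^ κ i) :=
    fun i => (O.kappa_facts hF i).2.2
  -- per-index data
  have hdata : ∀ i : Fin m, ∃ (T Q : A) (k : ℕ) (t u v w : Polynomial R),
      O.InB T ∧ T = Q * L ∧ O.ord T = k + r ∧ O.lc T = Φ t ∧
      (⇑O.σ.symm)^[k] t = u ∧ (¬ p i ∣ w) ∧
      u * (v * p i ^ κ i) = w * (C c * ∏ j, p j ^ e j) := by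
    intro i
    by_cases hκi : 0 < κ i
    · obtain ⟨k, P, hordP, hInB, w, v, t, l₁, hv, hcopr, hlcPL, hlcL₁, heq⟩ :=
        hκ3 i hκi
      have hl₁ : l₁ = C c * ∏ j, p j ^ e j := algQX_inj (hlcL₁.symm.trans hlcL)
      subst hl₁
      have hw0 : ¬ p i ∣ w := fun h =>
        (hirr i).1.not_isUnit (hcopr (p i) (dvd_pow_self _ (by omega)) h)
      have hl0 : (C c * ∏ j, p j ^ e j : Polynomial R) ≠ 0 :=
        mul_ne_zero (Polynomial.C_ne_zero.mpr hc)
          (Finset.prod_ne_zero_iff.mpr (fun j _ => pow_ne_zero _ (hirr j).1.ne_zero))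
      have hP0 : P ≠ 0 := by
        intro h0
        have hz : O.lc (P * L) = 0 := by
          rw [h0, zero_mul, O.lc_eq_coeff, O.coeff_zero']
        have ht0 : t = 0 := algQX_inj ((hlcPL.symm.trans hz).trans (map_zero _).symm)
        rw [ht0] at heq
        have hze : (0 : Polynomial R) = w * (C c * ∏ j, p j ^ e j) := by
          rw [← heq, iter_map_fix O.σ.symm (map_zero _) k, zero_mul]
        rcases mul_eq_zero.mp hze.symm with hw' | hl'
        · exact hw0 (hw' ▸ dvd_zero (p i))
        · exact hl0 hl'
      obtain ⟨hmul_ord, -, -⟩ := O.mul_facts hP0 hLB hL hlcL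
      refine ⟨P * L, P, k, t, (⇑O.σ.symm)^[k] t, v, w, hInB, rfl, ?_,
        hlcPL, rfl, hw0, heq⟩
      rw [hmul_ord, hordP, hordL]
    · have hκ0 : κ i = 0 := by omega
      refine ⟨L, 1, 0, C c * ∏ j, p j ^ e j, C c * ∏ j, p j ^ e j, 1, 1,
        hLB, (one_mul L).symm, by rw [hordL]; omega, hlcL, rfl, ?_, ?_⟩
      · exact fun h => (hirr i).1.not_isUnit (isUnit_of_dvd_one h)
      · rw [hκ0, pow_zero]; ring
  choose Ti Qi ki ti ui vi wi hInB hQ hordT hlcT htw hwnd hequ using hdata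
  -- shape extraction
  have hcop' : ∀ i j, i ≠ j → ¬ p i ∣ p j := by
    intro i j hij hdvd
    exact (hirr i).1.not_isUnit (hcop i j hij (p i) dvd_rfl hdvd)
  obtain ⟨s, cl, ci, Acst, hsk, hA0, hshape⟩ :=
    shape_extraction p e κ c hc hirr hcop' ui vi wi hwnd hequ
  -- common order
  set KK := Finset.univ.sup ki with hKK
  have hki : ∀ i, ki i ≤ KK := fun i => Finset.le_sup (Finset.mem_univ i)
  have hTi0 : ∀ i, Ti i ≠ 0 := by
    intro i h0
    have h1 := hordT i
    rw [h0, O.ord_zero] at h1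
    omega
  have hshift := fun i => O.Dpow_mul_facts (KK - ki i) (hInB i) (hTi0 i) (hlcT i)
  have hT2ord : ∀ i, O.ord (O.D ^ (KK - ki i) * Ti i) = KK + r := by
    intro i
    rw [(hshift i).2.2.1, hordT i]
    have := hki i
    omega
  have hsigma_u : ∀ i, (⇑O.σ)^[KK] (ui i) = (⇑O.σ)^[KK - ki i] (ti i) := by
    intro i
    rw [← htw i]
    exact O.sig_iter_symm_le (hki i) (ti i)
  -- the L term
  obtain ⟨hLB2, hL20, hL2ord, hL2lc⟩ := O.Dpow_mul_facts KK hLB hL hlcL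
  have hL2ord' : O.ord (O.D ^ KK * L) = KK + r := by rw [hL2ord, hordL]; omega
  -- summands
  set F : Fin m → A := fun i =>
    O.ιp ((⇑O.σ)^[KK] (ci i)) * (O.D ^ (KK - ki i) * Ti i) with hFdef
  have hFB : ∀ i, O.InB (F i) := by
    intro i j
    obtain ⟨x, hx⟩ := (hshift i).1 j
    exact ⟨(⇑O.σ)^[KK] (ci i) * x, by
      rw [hFdef]
      show O.coeff (O.ιp _ * _) j = _
      rw [O.ιp_mul_coeff, hx, map_mul]⟩
  have hFbd : ∀ i, ∀ j, KK + r < j → O.coeff (F i) j = 0 := by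
    intro i j hj
    show O.coeff (O.ιp _ * _) j = 0
    rw [O.ιp_mul_coeff, O.coeff_eq_zero_of_ord_lt (by rw [hT2ord i]; omega),
      mul_zero]
  have hFtop : ∀ i, O.coeff (F i) (KK + r)
      = Φ ((⇑O.σ)^[KK] (ci i) * (⇑O.σ)^[KK - ki i] (ti i)) := by
    intro i
    show O.coeff (O.ιp _ * _) _ = _
    rw [O.ιp_mul_coeff]
    have h1 : O.coeff (O.D ^ (KK - ki i) * Ti i) (KK + r)
        = Φ ((⇑O.σ)^[KK - ki i] (ti i)) := by
      rw [← hT2ord i, ← O.lc_eq_coeff]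
      exact (hshift i).2.2.2
    rw [h1, map_mul]
  obtain ⟨hSB, hSbd, hStop⟩ := O.sum_facts Finset.univ F (KK + r) hFB hFbd
    (fun i => (⇑O.σ)^[KK] (ci i) * (⇑O.σ)^[KK - ki i] (ti i)) hFtop
  set TL := O.ιp ((⇑O.σ)^[KK] cl) * (O.D ^ KK * L) with hTLdef
  have hTLB : O.InB TL := by
    intro j
    obtain ⟨x, hx⟩ := hLB2 j
    exact ⟨(⇑O.σ)^[KK] cl * x, by
      rw [hTLdef]
      show O.coeff (O.ιp _ * _) j = _
      rw [O.ιp_mul_coeff, hx, map_mul]⟩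
  have hTLbd : ∀ j, KK + r < j → O.coeff TL j = 0 := by
    intro j hj
    rw [hTLdef]
    show O.coeff (O.ιp _ * _) j = 0
    rw [O.ιp_mul_coeff, O.coeff_eq_zero_of_ord_lt (by rw [hL2ord']; omega),
      mul_zero]
  have hTLtop : O.coeff TL (KK + r)
      = Φ ((⇑O.σ)^[KK] cl * (⇑O.σ)^[KK] (C c * ∏ i, p i ^ e i)) := by
    rw [hTLdef]
    show O.coeff (O.ιp _ * _) _ = _
    rw [O.ιp_mul_coeff]
    have h1 : O.coeff (O.D ^ KK * L) (KK + r)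
        = Φ ((⇑O.σ)^[KK] (C c * ∏ i, p i ^ e i)) := by
      rw [← hL2ord', ← O.lc_eq_coeff]
      exact hL2lc
    rw [h1, map_mul]
  set T := TL + ∑ i, F i with hTdef
  set Ustar := cl * (C c * ∏ j, p j ^ e j) + ∑ i, ci i * ui i with hUdef
  have hUeq : Ustar = C Acst * ∏ i, p i ^ s i := hshape
  have hU0 : Ustar ≠ 0 := by
    rw [hUeq]
    exact mul_ne_zero (Polynomial.C_ne_zero.mpr hA0)
      (Finset.prod_ne_zero_iff.mpr (fun i _ => pow_ne_zero _ (hirr i).1.ne_zero))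
  have htopT : O.coeff T (KK + r) = Φ ((⇑O.σ)^[KK] Ustar) := by
    have hpoly : (⇑O.σ)^[KK] cl * (⇑O.σ)^[KK] (C c * ∏ i, p i ^ e i)
        + ∑ i, (⇑O.σ)^[KK] (ci i) * (⇑O.σ)^[KK - ki i] (ti i)
        = (⇑O.σ)^[KK] Ustar := by
      rw [hUdef, iter_map_add O.σ, iter_map_sum O.σ]
      congr 1
      · exact (iter_map_mul O.σ KK cl _).symm
      · exact Finset.sum_congr rfl (fun i _ => by
          rw [iter_map_mul O.σ, hsigma_u i])
    rw [hTdef, O.coeff_add, hTLtop, hStop, ← map_add, hpoly]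
  have htopT0 : O.coeff T (KK + r) ≠ 0 := by
    rw [htopT]
    exact algQX_ne_zero (iter_map_ne_zero O.σ KK hU0)
  have hbdT : ∀ j, KK + r < j → O.coeff T j = 0 := by
    intro j hj
    rw [hTdef, O.coeff_add, hTLbd j hj, hSbd j hj, add_zero]
  have hordT' : O.ord T = KK + r := O.ord_eq_of htopT0 hbdT
  have hlcT' : O.lc T = Φ ((⇑O.σ)^[KK] Ustar) := by
    rw [O.lc_eq_coeff, hordT']
    exact htopT
  have hTB : O.InB T := by
    intro j
    obtain ⟨x, hx⟩ := hTLB j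
    obtain ⟨y, hy⟩ := hSB j
    exact ⟨x + y, by rw [hTdef, O.coeff_add, hx, hy, map_add]⟩
  obtain ⟨QQ, hQQ⟩ : ∃ QQ, T = QQ * L := by
    refine ⟨O.ιp ((⇑O.σ)^[KK] cl) * O.D ^ KK
      + ∑ i, O.ιp ((⇑O.σ)^[KK] (ci i)) * (O.D ^ (KK - ki i) * Qi i), ?_⟩
    rw [hTdef, add_mul, Finset.sum_mul]
    congr 1
    · rw [hTLdef, mul_assoc]
    · refine Finset.sum_congr rfl (fun i _ => ?_)
      rw [hFdef]
      show O.ιp ((⇑O.σ)^[KK] (ci i)) * (O.D ^ (KK - ki i) * Ti i) = _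
      rw [hQ i, ← mul_assoc, ← mul_assoc, mul_assoc (O.ιp _)]
  have htwistT : (⇑O.σ.symm)^[O.ord T - r] ((⇑O.σ)^[KK] Ustar) = Ustar := by
    rw [hordT', show KK + r - r = KK from by omega, O.sig_symm_iter_sig_iter]
  refine ⟨T, (⇑O.σ)^[KK] Ustar, ⟨⟨hTB, QQ, hQQ⟩, by rw [hordT']; omega,
    Acst, c, (fun i => e i - s i), (⇑O.σ)^[KK] Ustar, C c * ∏ i, p i ^ e i,
    hc, (fun i => Nat.sub_le _ _), hlcT', hlcL, ?_, ?_⟩, hlcT', ?_⟩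
  · -- leading coefficient equation
    show (⇑O.σ.symm)^[O.ord T - r] ((⇑O.σ)^[KK] Ustar)
        * (C c * ∏ i, p i ^ (e i - s i)) = C Acst * (C c * ∏ i, p i ^ e i)
    rw [htwistT, hUeq]
    have hprodsum : (∏ i, p i ^ s i) * (∏ i, p i ^ (e i - s i))
        = ∏ i, p i ^ e i := by
      rw [← Finset.prod_mul_distrib]
      refine Finset.prod_congr rfl (fun i _ => ?_)
      rw [← pow_add]
      congr 1
      have := hsk i
      omega
    calc (C Acst * ∏ i, p i ^ s i) * (C c * ∏ i, p i ^ (e i - s i))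
        = C Acst * (C c * ((∏ i, p i ^ s i) * ∏ i, p i ^ (e i - s i))) := by
          ring
      _ = C Acst * (C c * ∏ i, p i ^ e i) := by rw [hprodsum]
  · -- non-removability
    intro i d hd
    refine hκ2 i d ?_
    have hd' : e i - s i < d := hd
    have h1 := hsk i
    omega
  · rw [htwistT]
    exact hU0

end OreAlg

/-- the set of constants `c_T` of desingularized operators (with
respect to the fixed primitive polynomial `g = ∏ pᵢ^{eᵢ-kᵢ}`) together with `0`
is an ideal of `R`; since `R` is a PID, there is a (completely desingularized)
operator whose constant divides the constant of every desingularized operator. -/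
theorem desing_constants_ideal {R : Type} [CommRing R] [IsDomain R]
    [IsPrincipalIdealRing R] {A : Type} [Ring A] (O : OreAlg R A)
    (L : A) (hL : L ≠ 0) (hLB : O.InB L)
    (r m : ℕ) (c : R) (p : Fin m → Polynomial R) (e : Fin m → ℕ)
    (hF : O.Factored L r m c p e)
    (g : Polynomial R) (hg : g.IsPrimitive)
    (hgall : ∀ (T : A) (t : Polynomial R), O.Desing L r m c p e T →
      O.lc T = algebraMap (Polynomial R) (QX R) t →
      ∃ cT : R, (⇑O.σ.symm)^[O.ord T - r] t = C cT * g) :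
    ((0 : R) ∈ O.DesingConsts L r m c p e g) ∧
    (∀ a b : R, a ∈ O.DesingConsts L r m c p e g →
      b ∈ O.DesingConsts L r m c p e g → a + b ∈ O.DesingConsts L r m c p e g) ∧
    (∀ s a : R, a ∈ O.DesingConsts L r m c p e g →
      s * a ∈ O.DesingConsts L r m c p e g) ∧
    (∃ (Q : A) (qt : Polynomial R) (cQ : R),
      O.Desing L r m c p e Q ∧
      O.lc Q = algebraMap (Polynomial R) (QX R) qt ∧
      (⇑O.σ.symm)^[O.ord Q - r] qt = C cQ * g ∧
      ∀ c' ∈ O.DesingConsts L r m c p e g, cQ ∣ c') := by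
  classical
  have hr : 0 < r := hF.2.1
  have hzero : (0 : R) ∈ O.DesingConsts L r m c p e g := Or.inl rfl
  have hadd : ∀ a b : R, a ∈ O.DesingConsts L r m c p e g →
      b ∈ O.DesingConsts L r m c p e g →
      a + b ∈ O.DesingConsts L r m c p e g :=
    fun a b ha hb => O.desingConsts_add hr hg a b ha hb
  have hsmul : ∀ s a : R, a ∈ O.DesingConsts L r m c p e g →
      s * a ∈ O.DesingConsts L r m c p e g :=
    fun s a ha => O.desingConsts_smul hr s a ha
  refine ⟨hzero, hadd, hsmul, ?_⟩
  -- a desingularized operator exists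
  obtain ⟨T0, t0, hdT0, hlcT0, htw0⟩ := O.exists_desing hL hLB hF
  obtain ⟨cT, hcT⟩ := hgall T0 t0 hdT0 hlcT0
  have hcT0 : cT ≠ 0 := by
    intro h
    rw [h, map_zero, zero_mul] at hcT
    exact htw0 hcT
  have hcTmem : cT ∈ O.DesingConsts L r m c p e g :=
    Or.inr ⟨T0, t0, hdT0, hlcT0, hcT⟩
  -- the ideal of constants
  let J : Ideal R :=
    { carrier := O.DesingConsts L r m c p e g
      zero_mem' := hzero
      add_mem' := fun {a b} ha hb => hadd a b ha hb
      smul_mem' := fun s a ha => by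
        simpa [smul_eq_mul] using hsmul s a ha }
  haveI hprin : J.IsPrincipal := IsPrincipalIdealRing.principal J
  obtain ⟨d, hdspan⟩ := hprin.principal
  have hdmem : d ∈ O.DesingConsts L r m c p e g := by
    have hd : d ∈ J := by
      rw [hdspan]
      exact Submodule.mem_span_singleton_self d
    exact hd
  have hdvd : ∀ c' ∈ O.DesingConsts L r m c p e g, d ∣ c' := by
    intro c' hc'
    have hm : c' ∈ J := hc'
    rw [hdspan] at hm
    exact Ideal.mem_span_singleton.mp hm
  have hd0 : d ≠ 0 := by
    intro h
    have := hdvd cT hcTmem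
    rw [h] at this
    exact hcT0 (zero_dvd_iff.mp this)
  rcases hdmem with h0 | ⟨Q, qt, hdQ, hlcQ, htwQ⟩
  · exact absurd h0 hd0
  · exact ⟨Q, qt, d, hdQ, hlcQ, htwQ, hdvd⟩
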